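/- Let z ∈ C¹([0,T], ℝᵏ), f ∈ C([0,T], ℝᵏ) and b ∈ ℝᵏ. If for every t ∈ [0,T] one has ∫₀ᵗ D_ξΩ(s,0,z(s)) ż(s) ds + z(0) = b + ∫₀ᵗ f(s) ds, then for every t ∈ [0,T] one has z(t) = b + ∫₀ᵗ D_ξΩ(0,s,Ω(s,0,z(s))) f(s) ds. -/

import Mathlib

open MeasureTheory intervalIntegral

/-- Lemma 1 of the paper.  Fix `T > 0` and `k ∈ ℕ`.  Let
`Ω : ℝ × ℝ × ℝᵏ → ℝᵏ` be jointly continuous, continuously differentiable in its third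
argument with derivative `DΩ`, and satisfy `Ω 0 t (Ω t 0 ξ) = ξ` for `t ∈ [0,T]`.
If `z ∈ C¹([0,T],ℝᵏ)`, `f ∈ C([0,T],ℝᵏ)`, `b ∈ ℝᵏ` and for every `t ∈ [0,T]`
`∫₀ᵗ DΩ(s,0,z s) ż(s) ds + z 0 = b + ∫₀ᵗ f s ds`, then for every `t ∈ [0,T]`
`z t = b + ∫₀ᵗ DΩ(0,s,Ω(s,0,z s)) (f s) ds`. -/
theorem stmt0 {k : ℕ} (T : ℝ) (hT : 0 < T)
    (Ω : ℝ → ℝ → (Fin k → ℝ) → (Fin k → ℝ))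
    (DΩ : ℝ → ℝ → (Fin k → ℝ) → ((Fin k → ℝ) →L[ℝ] (Fin k → ℝ)))
    (hΩcont : Continuous fun p : ℝ × ℝ × (Fin k → ℝ) => Ω p.1 p.2.1 p.2.2)
    (hDΩcont : Continuous fun p : ℝ × ℝ × (Fin k → ℝ) => DΩ p.1 p.2.1 p.2.2)
    (hΩderiv : ∀ t t₀ ξ, HasFDerivAt (fun x => Ω t t₀ x) (DΩ t t₀ ξ) ξ)
    (hΩinv : ∀ t ∈ Set.Icc (0 : ℝ) T, ∀ ξ, Ω 0 t (Ω t 0 ξ) = ξ)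
    (z z' : ℝ → Fin k → ℝ) (f : ℝ → Fin k → ℝ) (b : Fin k → ℝ)
    (hz : ∀ t ∈ Set.Icc (0 : ℝ) T, HasDerivAt z (z' t) t)
    (hz' : ContinuousOn z' (Set.Icc (0 : ℝ) T))
    (hf : ContinuousOn f (Set.Icc (0 : ℝ) T))
    (hyp : ∀ t ∈ Set.Icc (0 : ℝ) T,
      (∫ s in (0 : ℝ)..t, DΩ s 0 (z s) (z' s)) + z 0 = b + ∫ s in (0 : ℝ)..t, f s) :
    ∀ t ∈ Set.Icc (0 : ℝ) T,
      z t = b + ∫ s in (0 : ℝ)..t, DΩ 0 s (Ω s 0 (z s)) (f s) := by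
  have hb0 : z 0 = b := by
    have h := hyp 0 ⟨le_refl 0, hT.le⟩
    simpa using h
  have hzc : ContinuousOn z (Set.Icc 0 T) :=
    fun s hs => (hz s hs).continuousAt.continuousWithinAt
  set g : ℝ → Fin k → ℝ := fun s => DΩ s 0 (z s) (z' s) with hg
  have hgc : ContinuousOn g (Set.Icc 0 T) := by
    apply ContinuousOn.clm_apply _ hz'
    exact hDΩcont.comp_continuousOn
      (continuousOn_id.prodMk (continuousOn_const.prodMk hzc))
  have hint : ∀ t ∈ Set.Icc (0:ℝ) T,
      (∫ s in (0:ℝ)..t, g s) = ∫ s in (0:ℝ)..t, f s := by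
    intro t ht
    have h := hyp t ht
    rw [hb0] at h
    exact add_left_cancel (by rw [add_comm (∫ s in (0:ℝ)..t, g s) b] at h; exact h)
  -- g = f on [0,T]
  have hgf : ∀ s ∈ Set.Icc (0:ℝ) T, g s = f s := by
    intro s hs
    haveI : Fact (s ∈ Set.Icc (0:ℝ) T) := ⟨hs⟩
    have hsub : Set.uIcc (0:ℝ) s ⊆ Set.Icc 0 T := by
      rw [Set.uIcc_of_le hs.1]
      exact Set.Icc_subset_Icc le_rfl hs.2
    have hgint : IntervalIntegrable g volume 0 s :=
      (hgc.mono hsub).intervalIntegrable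
    have hfint : IntervalIntegrable f volume 0 s :=
      (hf.mono hsub).intervalIntegrable
    have hgm : StronglyMeasurableAtFilter g (nhdsWithin s (Set.Icc (0:ℝ) T)) volume :=
      ⟨Set.Icc 0 T, self_mem_nhdsWithin, hgc.aestronglyMeasurable measurableSet_Icc⟩
    have hfm : StronglyMeasurableAtFilter f (nhdsWithin s (Set.Icc (0:ℝ) T)) volume :=
      ⟨Set.Icc 0 T, self_mem_nhdsWithin, hf.aestronglyMeasurable measurableSet_Icc⟩
    have d1 : HasDerivWithinAt (fun u => ∫ x in (0:ℝ)..u, g x) (g s)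
        (Set.Icc 0 T) s :=
      integral_hasDerivWithinAt_right hgint hgm (hgc s hs)
    have d2 : HasDerivWithinAt (fun u => ∫ x in (0:ℝ)..u, f x) (f s)
        (Set.Icc 0 T) s :=
      integral_hasDerivWithinAt_right hfint hfm (hf s hs)
    have d1' : HasDerivWithinAt (fun u => ∫ x in (0:ℝ)..u, f x) (g s)
        (Set.Icc 0 T) s :=
      d1.congr (fun u hu => (hint u hu).symm) (hint s hs).symm
    have hud : UniqueDiffWithinAt ℝ (Set.Icc (0:ℝ) T) s :=
      (uniqueDiffOn_Icc hT) s hs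
    have := d1'.derivWithin hud
    rw [d2.derivWithin hud] at this
    exact this.symm
  -- chain rule: DΩ 0 s (Ω s 0 ξ) ∘ DΩ s 0 ξ = id
  have hchain : ∀ s ∈ Set.Icc (0:ℝ) T, ∀ ξ,
      (DΩ 0 s (Ω s 0 ξ)).comp (DΩ s 0 ξ) = ContinuousLinearMap.id ℝ (Fin k → ℝ) := by
    intro s hs ξ
    have h1 : HasFDerivAt (fun x => Ω 0 s (Ω s 0 x))
        ((DΩ 0 s (Ω s 0 ξ)).comp (DΩ s 0 ξ)) ξ :=
      (hΩderiv 0 s (Ω s 0 ξ)).comp ξ (hΩderiv s 0 ξ)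
    have heq : (fun x => Ω 0 s (Ω s 0 x)) = id := funext (hΩinv s hs)
    rw [heq] at h1
    exact h1.unique (hasFDerivAt_id ξ)
  -- RHS integrand equals z'
  have hrhs : ∀ s ∈ Set.Icc (0:ℝ) T, DΩ 0 s (Ω s 0 (z s)) (f s) = z' s := by
    intro s hs
    rw [← hgf s hs]
    have := congrArg (fun L : (Fin k → ℝ) →L[ℝ] (Fin k → ℝ) => L (z' s))
      (hchain s hs (z s))
    simpa using this
  intro t ht
  have hsub : Set.uIcc (0:ℝ) t ⊆ Set.Icc 0 T := by
    rw [Set.uIcc_of_le ht.1]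
    exact Set.Icc_subset_Icc le_rfl ht.2
  have h1 : (∫ s in (0:ℝ)..t, z' s) = z t - z 0 :=
    intervalIntegral.integral_eq_sub_of_hasDerivAt
      (fun s hs => hz s (hsub hs)) (hz'.mono hsub).intervalIntegrable
  have h2 : (∫ s in (0:ℝ)..t, DΩ 0 s (Ω s 0 (z s)) (f s)) = ∫ s in (0:ℝ)..t, z' s :=
    intervalIntegral.integral_congr (fun s hs => hrhs s (hsub hs))
  rw [h2, h1, hb0]
  abel
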